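/- Let r ≥ 3 and n ≥ 1, and let F be a family of subsets of [n] = {1,…,n} containing no 1-focal family of size r. Then |F| ≤ (r−1)·Σ_{k=0}^{n} C(n, ⌈(r−2)k/(r−1)⌉) / C(k, ⌈(r−2)k/(r−1)⌉), where C(·,·) denotes the binomial coefficient. -/

import Mathlib

/-- A family consisting of a focus set `A₀` and `m` further sets `As 0, …, As (m-1)`
(viewed as subsets of `[n]`, i.e. characteristic vectors in `{0,1}^n`) is *1-focal with
focus `A₀`* if for every `i ∈ A₀`, at most one of the sets `As j` misses `i`
(equivalently, at least `m - 1` of the `m` characteristic-vector entries equal `1`). -/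
def IsOneFocalWithFocus {n m : ℕ} (A₀ : Finset (Fin n)) (As : Fin m → Finset (Fin n)) : Prop :=
  ∀ i ∈ A₀, ∀ j j' : Fin m, i ∉ As j → i ∉ As j' → j = j'

/-- A family `F` of subsets of `[n]` contains a 1-focal family of size `r` if some `r`
distinct members `A₀, As 0, …, As (r-2)` of `F` are 1-focal with focus `A₀`. -/
def ContainsOneFocalFamily {n : ℕ} (F : Finset (Finset (Fin n))) (r : ℕ) : Prop :=
  ∃ A₀ ∈ F, ∃ As : Fin (r - 1) → Finset (Fin n),
    (∀ j, As j ∈ F) ∧ Function.Injective As ∧ (∀ j, As j ≠ A₀) ∧ IsOneFocalWithFocus A₀ As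

open Finset

namespace OneFocalAux

variable {n : ℕ}

/-- tuples of `j` pairwise disjoint `d`-subsets of `B`. -/
def tup (d : ℕ) (B : Finset (Fin n)) (j : ℕ) : Finset (Fin j → Finset (Fin n)) :=
  (Fintype.piFinset fun _ : Fin j => B.powersetCard d).filter
    fun f => ∀ i i' : Fin j, i ≠ i' → Disjoint (f i) (f i')

lemma mem_tup {d j : ℕ} {B : Finset (Fin n)} {f : Fin j → Finset (Fin n)} :
    f ∈ tup d B j ↔ (∀ i, f i ⊆ B ∧ (f i).card = d) ∧
      ∀ i i' : Fin j, i ≠ i' → Disjoint (f i) (f i') := by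
  simp [tup, Fintype.mem_piFinset, Finset.mem_powersetCard, forall_and]

def Nd (d : ℕ) : ℕ → ℕ → ℕ
  | 0, _ => 1
  | j+1, s => s.choose d * Nd d j (s - d)

lemma Nd_pos {d : ℕ} : ∀ {j s : ℕ}, j * d ≤ s → 0 < Nd d j s
  | 0, s, _ => Nat.one_pos
  | j+1, s, h => by
    rw [Nat.succ_mul] at h
    have hd : d ≤ s := by omega
    have h2 : j * d ≤ s - d := by omega
    exact Nat.mul_pos (Nat.choose_pos hd) (Nd_pos h2)

lemma card_tup (d : ℕ) : ∀ (j : ℕ) (B : Finset (Fin n)), (tup d B j).card = Nd d j B.card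
  | 0, B => by
    rw [show tup d B 0 = {fun i => i.elim0} from ?_]
    · simp [Nd]
    · ext f
      simp only [Finset.mem_singleton, mem_tup]
      constructor
      · intro _; funext i; exact i.elim0
      · rintro rfl
        exact ⟨fun i => i.elim0, fun i => i.elim0⟩
  | j+1, B => by
    have hsplit : tup d B (j+1)
        = (B.powersetCard d).biUnion
            (fun S => (tup d (B \ S) j).image (fun g => Fin.cons (α := fun _ => Finset (Fin n)) S g)) := by
      ext f
      simp only [Finset.mem_biUnion, Finset.mem_image, Finset.mem_powersetCard]
      constructor
      · intro hf
        obtain ⟨h1, h2⟩ := mem_tup.mp hf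
        refine ⟨f 0, ⟨(h1 0).1, (h1 0).2⟩, Fin.tail f, mem_tup.mpr ⟨fun l => ?_, ?_⟩,
          Fin.cons_self_tail f⟩
        · exact ⟨Finset.subset_sdiff.mpr ⟨(h1 l.succ).1, h2 l.succ 0 (Fin.succ_ne_zero l)⟩,
            (h1 l.succ).2⟩
        · intro l l' hll'
          exact h2 l.succ l'.succ (fun e => hll' (Fin.succ_injective _ e))
      · rintro ⟨S, ⟨hSB, hSd⟩, g, hg, rfl⟩
        obtain ⟨hg1, hg2⟩ := mem_tup.mp hg
        refine mem_tup.mpr ⟨fun i => ?_, fun i i' hii' => ?_⟩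
        · rcases Fin.eq_zero_or_eq_succ i with rfl | ⟨l, rfl⟩
          · simpa using ⟨hSB, hSd⟩
          · simp only [Fin.cons_succ]
            exact ⟨le_trans (hg1 l).1 Finset.sdiff_subset, (hg1 l).2⟩
        · rcases Fin.eq_zero_or_eq_succ i with rfl | ⟨l, rfl⟩ <;>
            rcases Fin.eq_zero_or_eq_succ i' with rfl | ⟨l', rfl⟩
          · exact absurd rfl hii'
          · simp only [Fin.cons_zero, Fin.cons_succ]
            exact (Finset.disjoint_of_subset_left (hg1 l').1 Finset.sdiff_disjoint).symm
          · simp only [Fin.cons_zero, Fin.cons_succ]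
            exact Finset.disjoint_of_subset_left (hg1 l).1 Finset.sdiff_disjoint
          · simp only [Fin.cons_succ]
            exact hg2 l l' (fun e => hii' (by rw [e]))
    rw [hsplit, Finset.card_biUnion, Nd]
    · have hterm : ∀ S ∈ B.powersetCard d,
          ((tup d (B \ S) j).image (fun g => Fin.cons (α := fun _ => Finset (Fin n)) S g)).card = Nd d j (B.card - d) := by
        intro S hS
        obtain ⟨hSB, hSd⟩ := Finset.mem_powersetCard.mp hS
        have hinj : Function.Injective
            (fun g : Fin j → Finset (Fin n) => Fin.cons (α := fun _ => Finset (Fin n)) S g) :=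
          fun g g' e => funext fun l => by simpa using congrFun e l.succ
        rw [Finset.card_image_of_injective _ hinj,
          card_tup d j, Finset.card_sdiff_of_subset hSB, hSd]
      rw [Finset.sum_congr rfl hterm, Finset.sum_const, Finset.card_powersetCard, smul_eq_mul]
    · intro S hS S' hS' hSS'
      rw [Function.onFun, Finset.disjoint_left]
      rintro f hf hf'
      obtain ⟨g, -, rfl⟩ := Finset.mem_image.mp hf
      obtain ⟨g', -, he⟩ := Finset.mem_image.mp hf'
      exact hSS' (by simpa using congrFun he.symm 0)

lemma card_filter_fix_le (d j : ℕ) (A S : Finset (Fin n)) (i : Fin (j+1)) :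
    ((tup d A (j+1)).filter fun f => f i = S).card ≤ Nd d j ((A \ S).card) := by
  rw [← card_tup d j (A \ S)]
  apply Finset.card_le_card_of_injOn (fun f => f ∘ i.succAbove)
  · intro f hf
    obtain ⟨hf1, hf2⟩ := mem_tup.mp (Finset.mem_filter.mp hf).1
    have hfi : f i = S := (Finset.mem_filter.mp hf).2
    refine mem_tup.mpr ⟨fun l => ?_,
      fun l l' h => hf2 _ _ (fun e => h (Fin.succAbove_right_injective e))⟩
    refine ⟨Finset.subset_sdiff.mpr ⟨(hf1 _).1, ?_⟩, (hf1 _).2⟩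
    rw [← hfi]
    exact hf2 _ i (Fin.succAbove_ne i l)
  · intro f hf f' hf' he
    funext x
    rcases eq_or_ne x i with rfl | hx
    · rw [(Finset.mem_filter.mp hf).2, (Finset.mem_filter.mp hf').2]
    · obtain ⟨l, rfl⟩ := Fin.exists_succAbove_eq hx
      exact congrFun he l

lemma own_aux {m : ℕ} {F : Finset (Finset (Fin n))}
    (hF : ¬ ∃ A₀ ∈ F, ∃ As : Fin (m + 1) → Finset (Fin n),
      (∀ j, As j ∈ F) ∧ Function.Injective As ∧ (∀ j, As j ≠ A₀) ∧ IsOneFocalWithFocus A₀ As)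
    {A : Finset (Fin n)} (hA : A ∈ F) {t : ℕ} (ht1 : t ≤ A.card)
    (ht2 : m * (A.card - t) ≤ t) :
    A.card.choose t ≤ (m + 1) *
      ((A.powersetCard t).filter fun T => ∀ B ∈ F, B.card = A.card → T ⊆ B → B = A).card := by
  set k := A.card with hk
  set d := k - t with hd
  set own := (A.powersetCard t).filter
    (fun T => ∀ B ∈ F, B.card = A.card → T ⊆ B → B = A) with hown
  have hkd : k - d = t := by omega
  -- Claim 1: every tuple of m+1 disjoint d-subsets of A has a block whose complement is "own"
  have claim1 : ∀ f ∈ tup d A (m+1), ∃ T ∈ own, ∃ i, f i = A \ T := by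
    intro f hf
    by_contra hcon
    push_neg at hcon
    obtain ⟨hf1, hf2⟩ := mem_tup.mp hf
    have hex : ∀ i : Fin (m+1), ∃ B, (B ∈ F ∧ B.card = A.card ∧ (A \ f i) ⊆ B) ∧ B ≠ A := by
      intro i
      have hTmem : A \ f i ∈ A.powersetCard t := by
        refine Finset.mem_powersetCard.mpr ⟨Finset.sdiff_subset, ?_⟩
        rw [Finset.card_sdiff_of_subset (hf1 i).1, (hf1 i).2, ← hk, hkd]
      have hTnotown : A \ f i ∉ own := by
        intro hT
        exact hcon (A \ f i) hT i (Finset.sdiff_sdiff_eq_self (hf1 i).1).symm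
      rw [hown, Finset.mem_filter] at hTnotown
      push_neg at hTnotown
      obtain ⟨B, hBF, hBcard, hBsub, hBne⟩ := hTnotown hTmem
      exact ⟨B, ⟨hBF, hBcard, hBsub⟩, hBne⟩
    choose B hB hBne using hex
    have hpetal : ∀ i, A \ B i ⊆ f i := by
      intro i
      have h1 : A \ B i ⊆ A \ (A \ f i) :=
        Finset.sdiff_subset_sdiff (Finset.Subset.refl A) (hB i).2.2
      rwa [Finset.sdiff_sdiff_eq_self (hf1 i).1] at h1
    have hne : ∀ i, (A \ B i).Nonempty := by
      intro i
      rw [Finset.sdiff_nonempty]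
      intro hsub
      exact hBne i ((Finset.eq_of_subset_of_card_le hsub ((hB i).2.1).le).symm)
    refine hF ⟨A, hA, B, fun i => (hB i).1, ?_, hBne, ?_⟩
    · intro i i' he
      by_contra hii'
      obtain ⟨x, hx⟩ := hne i
      have h1 : x ∈ f i := hpetal i hx
      have h2 : x ∈ f i' := hpetal i' (by rw [← he]; exact hx)
      exact Finset.disjoint_left.mp (hf2 i i' hii') h1 h2
    · intro x hx j j' hxj hxj'
      by_contra hjj'
      have h1 : x ∈ f j := hpetal j (Finset.mem_sdiff.mpr ⟨hx, hxj⟩)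
      have h2 : x ∈ f j' := hpetal j' (Finset.mem_sdiff.mpr ⟨hx, hxj'⟩)
      exact Finset.disjoint_left.mp (hf2 j j' hjj') h1 h2
  -- Counting
  have hsub : tup d A (m+1) ⊆
      own.biUnion (fun T => (tup d A (m+1)).filter fun f => ∃ i, f i = A \ T) := by
    intro f hf
    obtain ⟨T, hT, i, hi⟩ := claim1 f hf
    exact Finset.mem_biUnion.mpr ⟨T, hT, Finset.mem_filter.mpr ⟨hf, i, hi⟩⟩
  have hper : ∀ T ∈ own, ((tup d A (m+1)).filter fun f => ∃ i, f i = A \ T).card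
      ≤ (m+1) * Nd d m t := by
    intro T hT
    have hTA : T ⊆ A ∧ T.card = t := by
      have := (Finset.mem_filter.mp hT).1
      exact Finset.mem_powersetCard.mp this
    have hsub2 : ((tup d A (m+1)).filter fun f => ∃ i, f i = A \ T) ⊆
        (Finset.univ : Finset (Fin (m+1))).biUnion
          (fun i => (tup d A (m+1)).filter fun f => f i = A \ T) := by
      intro f hf
      obtain ⟨hf1, i, hi⟩ := Finset.mem_filter.mp hf
      exact Finset.mem_biUnion.mpr ⟨i, Finset.mem_univ i, Finset.mem_filter.mpr ⟨hf1, hi⟩⟩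
    calc ((tup d A (m+1)).filter fun f => ∃ i, f i = A \ T).card
        ≤ ∑ i : Fin (m+1), ((tup d A (m+1)).filter fun f => f i = A \ T).card :=
          le_trans (Finset.card_le_card hsub2) (Finset.card_biUnion_le)
      _ ≤ ∑ _i : Fin (m+1), Nd d m t := by
          refine Finset.sum_le_sum fun i _ => ?_
          have := card_filter_fix_le d m A (A \ T) i
          rwa [Finset.sdiff_sdiff_eq_self hTA.1, hTA.2] at this
      _ = (m+1) * Nd d m t := by
          rw [Finset.sum_const, Finset.card_univ, Fintype.card_fin, smul_eq_mul]
  have hcount : Nd d (m+1) k ≤ own.card * ((m+1) * Nd d m t) := by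
    calc Nd d (m+1) k = (tup d A (m+1)).card := (card_tup d (m+1) A).symm
      _ ≤ ∑ T ∈ own, ((tup d A (m+1)).filter fun f => ∃ i, f i = A \ T).card :=
          le_trans (Finset.card_le_card hsub) Finset.card_biUnion_le
      _ ≤ ∑ _T ∈ own, (m+1) * Nd d m t := Finset.sum_le_sum hper
      _ = own.card * ((m+1) * Nd d m t) := by rw [Finset.sum_const, smul_eq_mul]
  have hNd : Nd d (m+1) k = k.choose d * Nd d m t := by
    rw [Nd, hkd]
  have hpos : 0 < Nd d m t := Nd_pos ht2
  have hfinal : k.choose d ≤ (m+1) * own.card := by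
    have h := hcount
    rw [hNd] at h
    have h2 : k.choose d * Nd d m t ≤ ((m+1) * own.card) * Nd d m t := by
      calc k.choose d * Nd d m t ≤ own.card * ((m+1) * Nd d m t) := h
        _ = ((m+1) * own.card) * Nd d m t := by ring
    exact Nat.le_of_mul_le_mul_right h2 hpos
  have hcc : k.choose d = k.choose t := by rw [hd]; exact Nat.choose_symm ht1
  rwa [hcc] at hfinal

lemma perk {m : ℕ} {F : Finset (Finset (Fin n))}
    (hF : ¬ ∃ A₀ ∈ F, ∃ As : Fin (m + 1) → Finset (Fin n),
      (∀ j, As j ∈ F) ∧ Function.Injective As ∧ (∀ j, As j ≠ A₀) ∧ IsOneFocalWithFocus A₀ As)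
    (k t : ℕ) (ht1 : t ≤ k) (ht2 : m * (k - t) ≤ t) :
    (F.filter fun A => A.card = k).card * k.choose t ≤ (m + 1) * n.choose t := by
  classical
  set Fk := F.filter (fun A => A.card = k) with hFk
  set own : Finset (Fin n) → Finset (Finset (Fin n)) := fun A =>
    (A.powersetCard t).filter fun T => ∀ B ∈ F, B.card = A.card → T ⊆ B → B = A with hownd
  have hA_own : ∀ A ∈ Fk, k.choose t ≤ (m + 1) * (own A).card := by
    intro A hA
    obtain ⟨hAF, hAk⟩ := Finset.mem_filter.mp hA
    have h := own_aux hF hAF (t := t) (by rw [hAk]; exact ht1) (by rw [hAk]; exact ht2)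
    rw [hownd, ← hAk]
    exact h
  have hdisj : ∀ A ∈ Fk, ∀ A' ∈ Fk, A ≠ A' → Disjoint (own A) (own A') := by
    intro A hA A' hA' hne
    rw [Finset.disjoint_left]
    intro T hT hT'
    obtain ⟨hAF, hAk⟩ := Finset.mem_filter.mp hA
    obtain ⟨hA'F, hA'k⟩ := Finset.mem_filter.mp hA'
    have h1 := (Finset.mem_filter.mp hT).2
    have h2 := (Finset.mem_powersetCard.mp (Finset.mem_filter.mp hT').1).1
    exact hne (h1 A' hA'F (by rw [hAk, hA'k]) h2).symm
  have hsum : ∑ A ∈ Fk, (own A).card ≤ n.choose t := by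
    rw [← Finset.card_biUnion hdisj]
    have hsub : Fk.biUnion own ⊆ (Finset.univ : Finset (Fin n)).powersetCard t := by
      intro T hT
      obtain ⟨A, -, hTA⟩ := Finset.mem_biUnion.mp hT
      have := Finset.mem_powersetCard.mp (Finset.mem_filter.mp hTA).1
      exact Finset.mem_powersetCard.mpr ⟨Finset.subset_univ T, this.2⟩
    calc (Fk.biUnion own).card ≤ _ := Finset.card_le_card hsub
      _ = n.choose t := by rw [Finset.card_powersetCard, Finset.card_univ, Fintype.card_fin]
  calc Fk.card * k.choose t = ∑ _A ∈ Fk, k.choose t := by rw [Finset.sum_const, smul_eq_mul]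
    _ ≤ ∑ A ∈ Fk, (m + 1) * (own A).card := Finset.sum_le_sum hA_own
    _ = (m + 1) * ∑ A ∈ Fk, (own A).card := by rw [Finset.mul_sum]
    _ ≤ (m + 1) * n.choose t := Nat.mul_le_mul_left _ hsum

end OneFocalAux

/-- If `F` is a family of subsets of `[n]` containing no 1-focal family of size `r`, then
`|F| ≤ (r-1)·Σ_{k=0}^{n} C(n,⌈(r-2)k/(r-1)⌉)/C(k,⌈(r-2)k/(r-1)⌉)`. -/
theorem one_focal_upper_bound_sum (r n : ℕ) (hr : 3 ≤ r) (hn : 1 ≤ n)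
    (F : Finset (Finset (Fin n))) (hF : ¬ ContainsOneFocalFamily F r) :
    (F.card : ℝ) ≤
      ((r : ℝ) - 1) * ∑ k ∈ Finset.range (n + 1),
        (n.choose ⌈(((r : ℚ) - 2) * k) / ((r : ℚ) - 1)⌉₊ : ℝ)
          / (k.choose ⌈(((r : ℚ) - 2) * k) / ((r : ℚ) - 1)⌉₊ : ℝ) := by

  classical
  set m := r - 2 with hmdef
  have hm : r - 1 = m + 1 := by omega
  have hF' : ¬ ∃ A₀ ∈ F, ∃ As : Fin (m + 1) → Finset (Fin n),
      (∀ j, As j ∈ F) ∧ Function.Injective As ∧ (∀ j, As j ≠ A₀) ∧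
        IsOneFocalWithFocus A₀ As := by
    rw [← hm]
    exact hF
  have hr1 : (0 : ℚ) < (r : ℚ) - 1 := by
    have : (3 : ℚ) ≤ (r : ℚ) := by exact_mod_cast hr
    linarith
  have hrm : ((r : ℚ) - 2) = (m : ℚ) := by
    have : ((m : ℚ)) = ((r : ℚ)) - 2 := by
      rw [hmdef]
      push_cast [Nat.cast_sub (by omega : 2 ≤ r)]
      ring
    linarith
  -- per-k bound in ℝ
  have key : ∀ k ∈ Finset.range (n + 1),
      ((F.filter fun A => A.card = k).card : ℝ) ≤
        ((r : ℝ) - 1) * (n.choose ⌈(((r : ℚ) - 2) * k) / ((r : ℚ) - 1)⌉₊ : ℝ)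
          / (k.choose ⌈(((r : ℚ) - 2) * k) / ((r : ℚ) - 1)⌉₊ : ℝ) := by
    intro k _
    set t := ⌈(((r : ℚ) - 2) * k) / ((r : ℚ) - 1)⌉₊ with htdef
    have ht1 : t ≤ k := by
      rw [htdef]
      apply Nat.ceil_le.mpr
      rw [div_le_iff₀ hr1]
      have hk0 : (0 : ℚ) ≤ (k : ℚ) := Nat.cast_nonneg k
      nlinarith
    have hqt : ((r : ℚ) - 2) * k ≤ ((r : ℚ) - 1) * t := by
      have h1 : (((r : ℚ) - 2) * k) / ((r : ℚ) - 1) ≤ (t : ℚ) := Nat.le_ceil _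
      rw [div_le_iff₀ hr1] at h1
      linarith
    have hnat : m * k ≤ (m + 1) * t := by
      have : ((m : ℚ)) * k ≤ ((m : ℚ) + 1) * t := by
        rw [← hrm]
        have : ((r : ℚ) - 1) = ((r : ℚ) - 2) + 1 := by ring
        rw [this] at hqt
        linarith [hqt]
      exact_mod_cast this
    have ht2 : m * (k - t) ≤ t := by
      have h3 : m * (k - t) + m * t = m * k := by
        rw [← Nat.mul_add]
        congr 1
        omega
      have h4 : m * k ≤ m * t + t := by
        calc m * k ≤ (m + 1) * t := hnat
          _ = m * t + t := by ring
      omega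
    have hkey := OneFocalAux.perk hF' k t ht1 ht2
    have hpos : (0 : ℝ) < (k.choose t : ℝ) := by
      exact_mod_cast Nat.choose_pos ht1
    rw [le_div_iff₀ hpos]
    calc ((F.filter fun A => A.card = k).card : ℝ) * (k.choose t : ℝ)
        = (((F.filter fun A => A.card = k).card * k.choose t : ℕ) : ℝ) := by push_cast; ring
      _ ≤ (((m + 1) * n.choose t : ℕ) : ℝ) := by exact_mod_cast hkey
      _ = ((r : ℝ) - 1) * (n.choose t : ℝ) := by
          have hmr : ((m : ℝ)) + 1 = (r : ℝ) - 1 := by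
            rw [hmdef]
            push_cast [Nat.cast_sub (by omega : 2 ≤ r)]
            ring
          push_cast
          rw [hmr]
  have hcard : F.card = ∑ k ∈ Finset.range (n + 1), (F.filter fun A => A.card = k).card := by
    apply Finset.card_eq_sum_card_fiberwise
    intro A _
    refine Finset.mem_range.mpr (Nat.lt_succ_of_le ?_)
    simpa using Finset.card_le_univ A
  rw [hcard]
  push_cast
  calc (∑ k ∈ Finset.range (n + 1), ((F.filter fun A => A.card = k).card : ℝ))
      ≤ ∑ k ∈ Finset.range (n + 1),
          ((r : ℝ) - 1) * (n.choose ⌈(((r : ℚ) - 2) * k) / ((r : ℚ) - 1)⌉₊ : ℝ)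
            / (k.choose ⌈(((r : ℚ) - 2) * k) / ((r : ℚ) - 1)⌉₊ : ℝ) :=
        Finset.sum_le_sum key
    _ = _ := by
        rw [Finset.mul_sum]
        exact Finset.sum_congr rfl fun k _ => (mul_div_assoc _ _ _)
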